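/- In the setting of the uniqueness proof: let $\widehat{M}$ be a martingale with $\widehat{M}_0 = 0$ such that $\widehat{C}_t = \sup_{t \le s \le T}(X_s - \widehat{M}_s)$ is predictable, and let $\widehat{Y} = \widehat{M} + \widehat{C}$. Then the pathwise flat-off condition holds: $\int_0^T \mathbf{1}_{\{\widehat{Y}_{s-} > X_{s-}\}}\, d\widehat{C}_s = 0$ almost surely, i.e., the nonincreasing process $\widehat{C}$ decreases only at times $s$ where $\widehat{Y}_{s-} = X_{s-}$. -/

import Mathlib

open Set Filter MeasureTheory

variable {Ω : Type*} {m0 : MeasurableSpace Ω}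

/-- A process is a martingale on the time interval `[0,T]`. -/
def MartingaleOn (ℱ : Filtration ℝ m0) (μ : Measure Ω) (M : ℝ → Ω → ℝ) (T : ℝ) : Prop :=
  (∀ t ∈ Icc (0:ℝ) T, StronglyMeasurable[ℱ t] (M t)) ∧
  (∀ t ∈ Icc (0:ℝ) T, Integrable (M t) μ) ∧
  ∀ s t : ℝ, s ∈ Icc (0:ℝ) T → t ∈ Icc (0:ℝ) T → s ≤ t → μ[M t | ℱ s] =ᵐ[μ] M s

/-- A process is a supermartingale on the time interval `[0,T]`. -/
def SupermartingaleOn (ℱ : Filtration ℝ m0) (μ : Measure Ω) (M : ℝ → Ω → ℝ) (T : ℝ) : Prop :=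
  (∀ t ∈ Icc (0:ℝ) T, StronglyMeasurable[ℱ t] (M t)) ∧
  (∀ t ∈ Icc (0:ℝ) T, Integrable (M t) μ) ∧
  ∀ s t : ℝ, s ∈ Icc (0:ℝ) T → t ∈ Icc (0:ℝ) T → s ≤ t → μ[M t | ℱ s] ≤ᵐ[μ] M s

/-- A process is a submartingale on the time interval `[0,T]`. -/
def SubmartingaleOn (ℱ : Filtration ℝ m0) (μ : Measure Ω) (M : ℝ → Ω → ℝ) (T : ℝ) : Prop :=
  (∀ t ∈ Icc (0:ℝ) T, StronglyMeasurable[ℱ t] (M t)) ∧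
  (∀ t ∈ Icc (0:ℝ) T, Integrable (M t) μ) ∧
  ∀ s t : ℝ, s ∈ Icc (0:ℝ) T → t ∈ Icc (0:ℝ) T → s ≤ t → M s ≤ᵐ[μ] μ[M t | ℱ s]

/-- A real function is càdlàg on `[0,T]`: right-continuous on `[0,T)` with
left limits on `(0,T]`. -/
def CadlagOn (f : ℝ → ℝ) (T : ℝ) : Prop :=
  (∀ t ∈ Ico (0:ℝ) T, Tendsto f (nhdsWithin t (Ioi t)) (nhds (f t))) ∧
  ∀ t ∈ Ioc (0:ℝ) T, ∃ l, Tendsto f (nhdsWithin t (Iio t)) (nhds l)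

/-- The predictable σ-algebra on `ℝ × Ω` associated with the filtration `ℱ`,
generated by the stochastic intervals `(a,b] × A`, `A ∈ ℱ a`, together with the
time-zero sets `{0} × A`, `A ∈ ℱ 0`. -/
def predictableSigma (ℱ : Filtration ℝ m0) : MeasurableSpace (ℝ × Ω) :=
  MeasurableSpace.generateFrom
    ({s | ∃ a b : ℝ, ∃ A : Set Ω, a < b ∧ MeasurableSet[ℱ a] A ∧ s = Ioc a b ×ˢ A} ∪
      {s | ∃ A : Set Ω, MeasurableSet[ℱ 0] A ∧ s = ({0} : Set ℝ) ×ˢ A})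

/-- A process is predictable if it is measurable with respect to the predictable
σ-algebra. -/
def IsPredictable (ℱ : Filtration ℝ m0) (Z : ℝ → Ω → ℝ) : Prop :=
  Measurable[predictableSigma ℱ] (Function.uncurry Z)


/-- A measure on ℝ vanishes on a set each of whose points has a left
half-open interval of measure zero ending at it. -/
lemma measure_null_of_forall_Ioc (μ : Measure ℝ) (A : Set ℝ)
    (h : ∀ s ∈ A, ∃ ε > 0, μ (Set.Ioc (s - ε) s) = 0) : μ A = 0 := by
  classical
  have h' : ∀ s : ℝ, ∃ p : ℝ × ℚ, s ∈ A →
      0 < p.1 ∧ μ (Set.Ioc (s - p.1) s) = 0 ∧ (p.2 : ℝ) ∈ Set.Ioo (s - p.1) s := by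
    intro s
    by_cases hs : s ∈ A
    · obtain ⟨e, he, hm⟩ := h s hs
      obtain ⟨q, hq1, hq2⟩ := exists_rat_btwn (sub_lt_self s he)
      exact ⟨(e, q), fun _ => ⟨he, hm, hq1, hq2⟩⟩
    · exact ⟨(1, 0), fun c => absurd c hs⟩
  choose p hp using h'
  set W : Set ℝ := ⋃ s ∈ A, Set.Ioo (s - (p s).1) s with hWdef
  have hWnull : μ W = 0 := by
    obtain ⟨t, htc, htU⟩ := TopologicalSpace.isOpen_iUnion_countable
      (fun i : A => Set.Ioo ((i : ℝ) - (p i).1) (i : ℝ)) (fun _ => isOpen_Ioo)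
    have hWeq : W = ⋃ i ∈ t, Set.Ioo ((i : ℝ) - (p i).1) (i : ℝ) := by
      have h1 : W = ⋃ i : A, Set.Ioo ((i : ℝ) - (p i).1) (i : ℝ) :=
        Set.biUnion_eq_iUnion _ _
      rw [h1, ← htU]
    rw [hWeq, measure_biUnion_null_iff htc]
    intro i _
    exact measure_mono_null Set.Ioo_subset_Ioc_self ((hp i i.2).2.1)
  have key : ∀ s ∈ A, ∀ s' ∈ A, s ∉ W → s < s' → ((p s).2 : ℚ) ≠ (p s').2 := by
    intro s hs s' hs' hsW hlt heq
    have hq := (hp s hs).2.2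
    have hq' := (hp s' hs').2.2
    have hle : s ≤ s' - (p s').1 := by
      by_contra hgt
      push_neg at hgt
      exact hsW (Set.mem_biUnion hs' ⟨hgt, hlt⟩)
    have : ((p s).2 : ℝ) < ((p s').2 : ℝ) :=
      lt_of_lt_of_le hq.2 (le_trans hle (le_of_lt hq'.1))
    rw [heq] at this
    exact lt_irrefl _ this
  have hDc : (A \ W).Countable := by
    have hsub : A \ W ⊆ ⋃ r : ℚ, {s | s ∈ A \ W ∧ (p s).2 = r} :=
      fun s hs => Set.mem_iUnion.mpr ⟨(p s).2, hs, rfl⟩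
    refine Set.Countable.mono hsub (Set.countable_iUnion fun r => ?_)
    apply Set.Subsingleton.countable
    rintro x ⟨⟨hxA, hxW⟩, hxq⟩ y ⟨⟨hyA, hyW⟩, hyq⟩
    rcases lt_trichotomy x y with hxy | hxy | hxy
    · exact absurd (hxq.trans hyq.symm) (key x hxA y hyA hxW hxy)
    · exact hxy
    · exact absurd (hyq.trans hxq.symm) (key y hyA x hxA hyW hxy)
  have hDnull : μ (A \ W) = 0 := by
    have hbieq : A \ W = ⋃ s ∈ A \ W, {s} := (Set.biUnion_of_singleton _).symm
    rw [hbieq, measure_biUnion_null_iff hDc]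
    intro s hs
    refine measure_mono_null ?_ (hp s hs.1).2.1
    intro x hx
    rw [Set.mem_singleton_iff] at hx
    subst hx
    exact ⟨sub_lt_self x (hp x hs.1).1, le_refl x⟩
  have hle : μ A ≤ μ (W ∪ (A \ W)) :=
    measure_mono (fun s hs => by
      by_cases hsW : s ∈ W
      · exact Or.inl hsW
      · exact Or.inr ⟨hs, hsW⟩)
  have : μ A ≤ 0 := by
    calc μ A ≤ μ (W ∪ (A \ W)) := hle
      _ ≤ μ W + μ (A \ W) := measure_union_le _ _
      _ = 0 := by rw [hWnull, hDnull, add_zero]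
  exact le_antisymm this zero_le


lemma bddAbove_image_of_cadlagOn {f : ℝ → ℝ} {T : ℝ} (h : CadlagOn f T) :
    BddAbove (f '' Icc 0 T) := by
  have key : ∀ x ∈ Icc (0:ℝ) T, ∃ V : Set ℝ, V ∈ nhds x ∧ BddAbove (f '' (V ∩ Icc 0 T)) := by
    intro x hx
    have hright : ∃ b, x < b ∧ BddAbove (f '' (Ioo x b ∩ Icc 0 T)) := by
      rcases lt_or_eq_of_le hx.2 with hxT | hxT
      · have ht := h.1 x ⟨hx.1, hxT⟩
        have hmem : f ⁻¹' (Iio (f x + 1)) ∈ nhdsWithin x (Ioi x) :=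
          ht (Iio_mem_nhds (lt_add_one (f x)))
        rcases mem_nhdsGT_iff_exists_Ioo_subset.mp hmem with ⟨b, hb, hsub⟩
        refine ⟨b, hb, ⟨f x + 1, ?_⟩⟩
        rintro v ⟨u, ⟨hu, _⟩, rfl⟩
        exact le_of_lt (hsub hu)
      · refine ⟨x + 1, lt_add_one x, ?_⟩
        have hemp : Ioo x (x + 1) ∩ Icc (0:ℝ) T = ∅ := by
          apply Set.eq_empty_of_forall_notMem
          rintro u ⟨⟨h1, _⟩, _, h2⟩
          rw [← hxT] at h2
          linarith
        rw [hemp]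
        simp
    have hleft : ∃ a, a < x ∧ BddAbove (f '' (Ioo a x ∩ Icc 0 T)) := by
      rcases lt_or_eq_of_le hx.1 with hx0 | hx0
      · obtain ⟨l, hl⟩ := h.2 x ⟨hx0, hx.2⟩
        have hmem : f ⁻¹' (Iio (l + 1)) ∈ nhdsWithin x (Iio x) :=
          hl (Iio_mem_nhds (lt_add_one l))
        rcases mem_nhdsLT_iff_exists_Ioo_subset.mp hmem with ⟨a, ha, hsub⟩
        refine ⟨a, ha, ⟨l + 1, ?_⟩⟩
        rintro v ⟨u, ⟨hu, _⟩, rfl⟩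
        exact le_of_lt (hsub hu)
      · refine ⟨x - 1, by linarith, ?_⟩
        have hemp : Ioo (x - 1) x ∩ Icc (0:ℝ) T = ∅ := by
          apply Set.eq_empty_of_forall_notMem
          rintro u ⟨⟨_, h1⟩, h2, _⟩
          rw [← hx0] at h1
          linarith
        rw [hemp]
        simp
    obtain ⟨b, hxb, hbB⟩ := hright
    obtain ⟨a, hax, haB⟩ := hleft
    refine ⟨Ioo a b, Ioo_mem_nhds hax hxb, ?_⟩
    have hsplit : f '' (Ioo a b ∩ Icc 0 T) ⊆
        f '' (Ioo a x ∩ Icc 0 T) ∪ (f '' (Ioo x b ∩ Icc 0 T) ∪ {f x}) := by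
      rintro v ⟨u, ⟨⟨h1, h2⟩, hu2⟩, rfl⟩
      rcases lt_trichotomy u x with hc | hc | hc
      · exact Or.inl ⟨u, ⟨⟨h1, hc⟩, hu2⟩, rfl⟩
      · exact Or.inr (Or.inr (by simp [hc]))
      · exact Or.inr (Or.inl ⟨u, ⟨⟨hc, h2⟩, hu2⟩, rfl⟩)
    exact (haB.union (hbB.union bddAbove_singleton)).mono hsplit
  choose! V hV1 hV2 using key
  obtain ⟨t, ht1, ht2⟩ := (isCompact_Icc : IsCompact (Icc (0:ℝ) T)).elim_nhds_subcover V
    (fun x hx => hV1 x hx)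
  have hcover : f '' Icc 0 T ⊆ ⋃ x ∈ (t : Set ℝ), f '' (V x ∩ Icc 0 T) := by
    rintro v ⟨u, hu, rfl⟩
    rcases Set.mem_iUnion₂.mp (ht2 hu) with ⟨x, hxt, hux⟩
    exact Set.mem_iUnion₂.mpr ⟨x, hxt, ⟨u, ⟨hux, hu⟩, rfl⟩⟩
  refine BddAbove.mono hcover ?_
  rw [Set.Finite.bddAbove_biUnion (Finset.finite_toSet t)]
  intro x hxt
  exact hV2 x (ht1 x hxt)

/-- Flat-off condition: if `M̂` is a martingale with `M̂ 0 = 0` whose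
future-supremum `Ĉ t = sup_{t ≤ s ≤ T} (X s - M̂ s)` is predictable, and
`Ŷ = M̂ + Ĉ`, then the (pathwise) Stieltjes measure of the nonincreasing process
`Ĉ` does not charge the set `{s : Ŷ_{s-} > X_{s-}}`, almost surely. -/
theorem futureSup_flat_off_condition
    (μ : Measure Ω) [IsProbabilityMeasure μ] (ℱ : Filtration ℝ m0)
    (T : ℝ) (hT : 0 < T) (X U Mhat Chat Yhat Xm Ym : ℝ → Ω → ℝ)
    (hXad : ∀ t ∈ Icc (0:ℝ) T, StronglyMeasurable[ℱ t] (X t))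
    (hXcadlag : ∀ ω, CadlagOn (fun t => X t ω) T)
    (hUmart : MartingaleOn ℱ μ U T)
    (hUnn : ∀ t ∈ Icc (0:ℝ) T, ∀ ω, 0 ≤ U t ω)
    (hUui : UniformIntegrable (fun t : Icc (0:ℝ) T => U t) 1 μ)
    (hdom : ∀ t ∈ Icc (0:ℝ) T, ∀ ω, |X t ω| ≤ U t ω)
    (hMmart : MartingaleOn ℱ μ Mhat T) (hM0 : ∀ ω, Mhat 0 ω = 0)
    (hMcadlag : ∀ ω, CadlagOn (fun t => Mhat t ω) T)
    (hCdef : ∀ t ∈ Icc (0:ℝ) T, ∀ ω,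
      Chat t ω = sSup ((fun s => X s ω - Mhat s ω) '' Icc t T))
    (hCpred : IsPredictable ℱ Chat)
    (hYdef : ∀ t ∈ Icc (0:ℝ) T, ∀ ω, Yhat t ω = Mhat t ω + Chat t ω)
    -- left limits of `X` and of `Ŷ`
    (hXm : ∀ ω, ∀ s ∈ Ioc (0:ℝ) T,
      Tendsto (fun u => X u ω) (nhdsWithin s (Iio s)) (nhds (Xm s ω)))
    (hYm : ∀ ω, ∀ s ∈ Ioc (0:ℝ) T,
      Tendsto (fun u => Yhat u ω) (nhdsWithin s (Iio s)) (nhds (Ym s ω)))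
    -- the pathwise Stieltjes measure of `Ĉ`, realized via `F ω = -Ĉ(·, ω)`
    (F : Ω → StieltjesFunction ℝ)
    (hF : ∀ ω, ∀ t ∈ Icc (0:ℝ) T, F ω t = -Chat t ω) :
    ∀ᵐ ω ∂μ, (F ω).measure {s ∈ Ioc (0:ℝ) T | Xm s ω < Ym s ω} = 0 := by
  refine Filter.Eventually.of_forall fun ω => ?_
  apply measure_null_of_forall_Ioc
  rintro s hsmem
  obtain ⟨⟨hs0, hsT⟩, hlt⟩ := hsmem
  -- left limit of Mhat at s
  obtain ⟨Mm, hMm⟩ := (hMcadlag ω).2 s ⟨hs0, hsT⟩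
  -- the path f = X - Mhat is cadlag, hence bounded above on [0,T]
  have hfc : CadlagOn (fun u => X u ω - Mhat u ω) T := by
    constructor
    · intro t ht
      exact ((hXcadlag ω).1 t ht).sub ((hMcadlag ω).1 t ht)
    · intro t ht
      obtain ⟨l1, h1⟩ := (hXcadlag ω).2 t ht
      obtain ⟨l2, h2⟩ := (hMcadlag ω).2 t ht
      exact ⟨l1 - l2, h1.sub h2⟩
  have hbdd : BddAbove ((fun u => X u ω - Mhat u ω) '' Icc 0 T) :=
    bddAbove_image_of_cadlagOn hfc
  -- left limit of Chat at s
  have hChatT : Tendsto (fun u => Chat u ω) (nhdsWithin s (Iio s)) (nhds (Ym s ω - Mm)) := by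
    have hYt := hYm ω s ⟨hs0, hsT⟩
    refine Filter.Tendsto.congr' ?_ (hYt.sub hMm)
    filter_upwards [Ioo_mem_nhdsLT hs0] with u hu
    rw [hYdef u ⟨le_of_lt hu.1, le_of_lt (lt_of_lt_of_le hu.2 hsT)⟩ ω]
    ring
  have hft : Tendsto (fun u => X u ω - Mhat u ω) (nhdsWithin s (Iio s))
      (nhds (Xm s ω - Mm)) := (hXm ω s ⟨hs0, hsT⟩).sub hMm
  set fm := Xm s ω - Mm with hfm
  set Cm := Ym s ω - Mm with hCm
  have hfmCm : fm < Cm := sub_lt_sub_right hlt Mm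
  set m := (fm + Cm) / 2 with hmdef
  have hm1 : fm < m := by rw [hmdef]; linarith
  have hm2 : m < Cm := by rw [hmdef]; linarith
  have hev : ∀ᶠ u in nhdsWithin s (Iio s),
      (X u ω - Mhat u ω < m ∧ m < Chat u ω) ∧ u ∈ Ioo (0:ℝ) s := by
    have e1 : (fun u => X u ω - Mhat u ω) ⁻¹' (Iio m) ∈ nhdsWithin s (Iio s) :=
      hft (Iio_mem_nhds hm1)
    have e2 : (fun u => Chat u ω) ⁻¹' (Ioi m) ∈ nhdsWithin s (Iio s) :=
      hChatT (Ioi_mem_nhds hm2)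
    have e3 : Ioo (0:ℝ) s ∈ nhdsWithin s (Iio s) := Ioo_mem_nhdsLT hs0
    filter_upwards [e1, e2, e3] with u h1 h2 h3
    exact ⟨⟨h1, h2⟩, h3⟩
  rcases mem_nhdsLT_iff_exists_Ioo_subset.mp hev with ⟨c, hc, hsub⟩
  set t := (max c 0 + s) / 2 with htdef
  have hmax : max c 0 < s := max_lt hc hs0
  have htlt : t < s := by rw [htdef]; linarith
  have htgtc : c < t := lt_of_le_of_lt (le_max_left c 0) (by rw [htdef]; linarith)
  have htpos : 0 < t := lt_of_le_of_lt (le_max_right c 0) (by rw [htdef]; linarith)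
  have htT : t ≤ T := le_trans (le_of_lt htlt) hsT
  have hbd_t : BddAbove ((fun u => X u ω - Mhat u ω) '' Icc t T) :=
    hbdd.mono (Set.image_mono (Icc_subset_Icc_left (le_of_lt htpos)))
  have hbd_s : BddAbove ((fun u => X u ω - Mhat u ω) '' Icc s T) :=
    hbdd.mono (Set.image_mono (Icc_subset_Icc_left (le_of_lt hs0)))
  have hne_s : ((fun u => X u ω - Mhat u ω) '' Icc s T).Nonempty :=
    ⟨X s ω - Mhat s ω, ⟨s, ⟨le_refl s, hsT⟩, rfl⟩⟩
  have hne_t : ((fun u => X u ω - Mhat u ω) '' Icc t T).Nonempty :=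
    ⟨X t ω - Mhat t ω, ⟨t, ⟨le_refl t, htT⟩, rfl⟩⟩
  have hCs_le_Ct : Chat s ω ≤ Chat t ω := by
    rw [hCdef s ⟨le_of_lt hs0, hsT⟩ ω, hCdef t ⟨le_of_lt htpos, htT⟩ ω]
    exact csSup_le_csSup hbd_t hne_s (Set.image_mono (Icc_subset_Icc_left (le_of_lt htlt)))
  have hCt_le : Chat t ω ≤ max m (Chat s ω) := by
    rw [hCdef t ⟨le_of_lt htpos, htT⟩ ω]
    apply csSup_le hne_t
    rintro v ⟨u, ⟨hu1, hu2⟩, rfl⟩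
    rcases lt_or_ge u s with hus | hus
    · exact le_max_of_le_left (le_of_lt (hsub ⟨lt_of_lt_of_le htgtc hu1, hus⟩).1.1)
    · refine le_max_of_le_right ?_
      rw [hCdef s ⟨le_of_lt hs0, hsT⟩ ω]
      exact le_csSup hbd_s ⟨u, ⟨hus, hu2⟩, rfl⟩
  have hmt : m < Chat t ω := (hsub ⟨htgtc, htlt⟩).1.2
  have hCeq : Chat t ω = Chat s ω := by
    refine le_antisymm ?_ hCs_le_Ct
    rcases le_max_iff.mp hCt_le with hcase | hcase
    · linarith
    · exact hcase
  refine ⟨s - t, by linarith, ?_⟩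
  have hst : s - (s - t) = t := by ring
  rw [hst, StieltjesFunction.measure_Ioc, hF ω s ⟨le_of_lt hs0, hsT⟩,
    hF ω t ⟨le_of_lt htpos, htT⟩, hCeq]
  simp
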